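/- Let r > 0 and let ξ, g : [0, r] → ℝ be continuous with ξ C¹ on (0, r], ξ(0) = 0, ξ bounded near 0, and d/ds (s·ξ(s)) = −s·g(s) for s ∈ (0, r]. Then ∫_0^r ξ(s)²/s ds ≤ ∫_0^r s·g(s)² ds. -/

import Mathlib

open MeasureTheory Set Function
open scoped ENNReal

/-- Cauchy–Schwarz with weight 1 on `Ioc 0 s`. -/
lemma cs_aux (s : ℝ) (hs : 0 < s) (f : ℝ → ℝ) (hf : ContinuousOn f (Icc 0 s)) :
    (∫ t in Ioc 0 s, f t) ^ 2 ≤ s * ∫ t in Ioc 0 s, f t ^ 2 := by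
  have hint : IntegrableOn f (Ioc 0 s) :=
    (hf.integrableOn_Icc).mono_set Ioc_subset_Icc_self
  have hint2 : IntegrableOn (fun t => f t ^ 2) (Ioc 0 s) :=
    ((hf.pow 2).integrableOn_Icc).mono_set Ioc_subset_Icc_self
  set I1 := ∫ t in Ioc 0 s, f t with hI1
  set I2 := ∫ t in Ioc 0 s, f t ^ 2 with hI2
  set c := I1 / s with hc
  have h0 : 0 ≤ ∫ t in Ioc 0 s, (f t - c) ^ 2 :=
    integral_nonneg fun t => sq_nonneg _
  have hsub : IntegrableOn (fun t => f t ^ 2 - 2 * c * f t) (Ioc 0 s) := by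
    simpa [Pi.sub_def] using hint2.sub (hint.const_mul (2 * c))
  have hconstInt : IntegrableOn (fun _t : ℝ => c ^ 2) (Ioc 0 s) :=
    integrableOn_const (by simp [Real.volume_Ioc])
  have hconst : (∫ _t in Ioc 0 s, c ^ 2) = c ^ 2 * s := by
    simp [Real.volume_Ioc, ENNReal.toReal_ofReal hs.le, mul_comm, hs.le]
  have heq : (∫ t in Ioc 0 s, (f t - c) ^ 2) = I2 - (2 * c) * I1 + c ^ 2 * s := by
    have hexp : ∀ t : ℝ, (f t - c) ^ 2 = (f t ^ 2 - 2 * c * f t) + c ^ 2 := fun t => by ring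
    simp_rw [hexp]
    rw [integral_add hsub hconstInt, hconst, integral_sub hint2 (hint.const_mul (2 * c)),
      MeasureTheory.integral_const_mul]
  rw [heq, hc] at h0
  have hs' : s ≠ 0 := ne_of_gt hs
  have e2 : (I1 / s) ^ 2 * s = I1 ^ 2 / s := by field_simp
  have e1 : 2 * (I1 / s) * I1 = 2 * (I1 ^ 2 / s) := by ring
  rw [e1, e2] at h0
  have h2 : I1 ^ 2 / s ≤ I2 := by linarith
  have := (div_le_iff₀ hs).1 h2
  linarith

theorem stmt_12 (r : ℝ) (hr : 0 < r) (ξ g : ℝ → ℝ)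
    (hξ : ContinuousOn ξ (Icc 0 r)) (hg : ContinuousOn g (Icc 0 r))
    (hξ0 : ξ 0 = 0)
    (hd : ∀ s ∈ Ioc 0 r,
      HasDerivWithinAt (fun t => t * ξ t) (-(s * g s)) (Ioc 0 r) s) :
    (∫⁻ s in Ioc 0 r, ENNReal.ofReal (ξ s ^ 2 / s)) ≤
      ENNReal.ofReal (∫ s in Ioc 0 r, s * g s ^ 2) := by
  -- Step 1: FTC representation  s·ξ s = -∫_{(0,s]} t g t
  have hrep : ∀ s ∈ Ioc 0 r, s * ξ s = -∫ t in Ioc 0 s, t * g t := by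
    intro s hs
    obtain ⟨hs0, hsr⟩ := hs
    have hsub : Icc (0:ℝ) s ⊆ Icc 0 r := Icc_subset_Icc le_rfl hsr
    have hcont : ContinuousOn (fun t => t * ξ t) (Icc 0 s) :=
      (continuousOn_id.mul (hξ.mono hsub))
    have hderiv : ∀ x ∈ Ioo (0:ℝ) s,
        HasDerivWithinAt (fun t => t * ξ t) (-(x * g x)) (Ioi x) x := by
      intro x hx
      have hxI : x ∈ Ioc 0 r := ⟨hx.1, le_of_lt (lt_of_lt_of_le hx.2 hsr)⟩
      have hnhds : Ioc (0:ℝ) r ∈ nhds x :=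
        Filter.mem_of_superset (isOpen_Ioo.mem_nhds ⟨hx.1, lt_of_lt_of_le hx.2 hsr⟩)
          Ioo_subset_Ioc_self
      exact ((hd x hxI).hasDerivAt hnhds).hasDerivWithinAt
    have hint : IntervalIntegrable (fun x => -(x * g x)) volume 0 s := by
      apply ContinuousOn.intervalIntegrable
      rw [uIcc_of_le hs0.le]
      exact (continuousOn_id.mul (hg.mono hsub)).neg
    have := intervalIntegral.integral_eq_sub_of_hasDeriv_right_of_le hs0.le hcont hderiv hint
    rw [intervalIntegral.integral_neg, intervalIntegral.integral_of_le hs0.le] at this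
    simp only [hξ0, mul_zero, sub_zero] at this
    linarith [this]
  -- Step 2: pointwise bound
  have hpt : ∀ s ∈ Ioc 0 r,
      ξ s ^ 2 / s ≤ s⁻¹ ^ 2 * ∫ t in Ioc 0 s, t ^ 2 * g t ^ 2 := by
    intro s hs
    obtain ⟨hs0, hsr⟩ := hs
    have hsub : Icc (0:ℝ) s ⊆ Icc 0 r := Icc_subset_Icc le_rfl hsr
    have hcs := cs_aux s hs0 (fun t => t * g t) (continuousOn_id.mul (hg.mono hsub))
    have hsq : ∀ t : ℝ, (t * g t) ^ 2 = t ^ 2 * g t ^ 2 := fun t => by ring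
    simp_rw [hsq] at hcs
    set R := ∫ t in Ioc 0 s, t ^ 2 * g t ^ 2 with hR
    have h1 : (s * ξ s) ^ 2 ≤ s * R := by
      rw [hrep s ⟨hs0, hsr⟩, neg_pow]; simpa using hcs
    rw [div_le_iff₀ hs0]
    have hs2 : (0:ℝ) < s ^ 2 := by positivity
    have hmul : ξ s ^ 2 * s ^ 2 ≤ s * R := by nlinarith [h1]
    have key : s⁻¹ ^ 2 * R * s = s * R / s ^ 2 := by field_simp
    rw [key, le_div_iff₀ hs2]
    exact hmul
  -- Step 3: measure-theoretic bookkeeping.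
  set I : Set ℝ := Ioc 0 r with hIdef
  have hgae : AEMeasurable g (volume.restrict (Icc 0 r)) := hg.aemeasurable measurableSet_Icc
  set g₀ : ℝ → ℝ := hgae.mk g with hg₀def
  have hg₀m : Measurable g₀ := hgae.measurable_mk
  have hgg₀ : g =ᵐ[volume.restrict (Icc 0 r)] g₀ := hgae.ae_eq_mk
  set G : ℝ → ℝ≥0∞ := fun t => ENNReal.ofReal (t ^ 2 * g₀ t ^ 2) with hGdef
  have hGm : Measurable G :=
    ((measurable_id.pow_const 2).mul (hg₀m.pow_const 2)).ennreal_ofReal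
  -- inner integral equality with g₀, for s ∈ I
  have hinner : ∀ s ∈ I, ENNReal.ofReal (∫ t in Ioc 0 s, t ^ 2 * g t ^ 2)
      = ∫⁻ t in Ioc 0 s, G t := by
    intro s hs
    have hsubI : Ioc 0 s ⊆ Icc 0 r := fun x hx => ⟨hx.1.le, hx.2.trans hs.2⟩
    have hic : IntegrableOn (fun t => t ^ 2 * g t ^ 2) (Ioc 0 s) :=
      (((continuousOn_id.pow 2).mul ((hg.mono (Icc_subset_Icc le_rfl hs.2)).pow 2)).integrableOn_Icc).mono_set
        Ioc_subset_Icc_self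
    rw [ofReal_integral_eq_lintegral_ofReal hic (Filter.Eventually.of_forall fun t => by positivity)]
    apply lintegral_congr_ae
    have hae : g =ᵐ[volume.restrict (Ioc 0 s)] g₀ :=
      ae_restrict_of_ae_restrict_of_subset hsubI hgg₀
    filter_upwards [hae] with t ht
    rw [hGdef, ht]
  have hIsubIcc : I ⊆ Icc 0 r := Ioc_subset_Icc_self
  -- Step 3a: domination of LHS by a double lintegral
  have step1 : (∫⁻ s in I, ENNReal.ofReal (ξ s ^ 2 / s)) ≤
      ∫⁻ s in I, ∫⁻ t in I, ENNReal.ofReal (s⁻¹ ^ 2) * (Ioc 0 s).indicator G t := by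
    apply lintegral_mono_ae
    filter_upwards [ae_restrict_mem measurableSet_Ioc] with s hs
    have hind : (∫⁻ t in I, (Ioc 0 s).indicator G t) = ∫⁻ t in Ioc 0 s, G t := by
      rw [lintegral_indicator measurableSet_Ioc, Measure.restrict_restrict measurableSet_Ioc,
        inter_eq_left.2 (Ioc_subset_Ioc le_rfl hs.2)]
    calc ENNReal.ofReal (ξ s ^ 2 / s)
        ≤ ENNReal.ofReal (s⁻¹ ^ 2 * ∫ t in Ioc 0 s, t ^ 2 * g t ^ 2) :=
          ENNReal.ofReal_le_ofReal (hpt s hs)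
      _ = ENNReal.ofReal (s⁻¹ ^ 2) * ENNReal.ofReal (∫ t in Ioc 0 s, t ^ 2 * g t ^ 2) :=
          ENNReal.ofReal_mul (by positivity)
      _ = ENNReal.ofReal (s⁻¹ ^ 2) * ∫⁻ t in Ioc 0 s, G t := by rw [hinner s hs]
      _ = ENNReal.ofReal (s⁻¹ ^ 2) * ∫⁻ t in I, (Ioc 0 s).indicator G t := by rw [hind]
      _ = ∫⁻ t in I, ENNReal.ofReal (s⁻¹ ^ 2) * (Ioc 0 s).indicator G t :=
          (lintegral_const_mul' _ _ ENNReal.ofReal_ne_top).symm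
  -- Step 3b: Tonelli swap
  have hmeas : AEMeasurable
      (uncurry fun s t => ENNReal.ofReal (s⁻¹ ^ 2) * (Ioc 0 s).indicator G t)
      ((volume.restrict I).prod (volume.restrict I)) := by
    apply Measurable.aemeasurable
    have heqf : (uncurry fun s t => ENNReal.ofReal (s⁻¹ ^ 2) * (Ioc 0 s).indicator G t)
        = fun p : ℝ × ℝ => ENNReal.ofReal (p.1⁻¹ ^ 2) *
            ({q : ℝ × ℝ | 0 < q.2 ∧ q.2 ≤ q.1}.indicator (fun q => G q.2) p) := by
      ext ⟨s, t⟩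
      simp only [uncurry]
      congr 1
    rw [heqf]
    apply Measurable.mul
    · exact (measurable_fst.inv.pow_const 2).ennreal_ofReal
    · refine Measurable.indicator (hGm.comp measurable_snd) ?_
      have : {q : ℝ × ℝ | 0 < q.2 ∧ q.2 ≤ q.1}
          = {q : ℝ × ℝ | 0 < q.2} ∩ {q : ℝ × ℝ | q.2 ≤ q.1} := rfl
      rw [this]
      exact (measurableSet_lt measurable_const measurable_snd).inter
        (measurableSet_le measurable_snd measurable_fst)
  have hswap := lintegral_lintegral_swap hmeas
  -- Step 3c: evaluation of the inner integral after swapping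
  have hinner2 : ∀ t ∈ I, (∫⁻ s in I, ENNReal.ofReal (s⁻¹ ^ 2) * (Ioc 0 s).indicator G t)
      ≤ ENNReal.ofReal (t * g₀ t ^ 2) := by
    intro t ht
    have htpos : 0 < t := ht.1
    have heqfun : ∀ s : ℝ, ENNReal.ofReal (s⁻¹ ^ 2) * (Ioc 0 s).indicator G t
        = (Ici t).indicator (fun s => ENNReal.ofReal (s⁻¹ ^ 2) * G t) s := by
      intro s
      by_cases h : t ≤ s
      · have h1 : t ∈ Ioc 0 s := ⟨htpos, h⟩
        have h2 : s ∈ Ici t := h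
        rw [Set.indicator_of_mem h1, Set.indicator_of_mem h2]
      · have h1 : t ∉ Ioc 0 s := fun hh => h hh.2
        have h2 : s ∉ Ici t := h
        rw [Set.indicator_of_notMem h1, Set.indicator_of_notMem h2, mul_zero]
    have hsetEq : Ici t ∩ I = Icc t r := by
      ext x
      constructor
      · rintro ⟨h1, _h2, h3⟩; exact ⟨h1, h3⟩
      · rintro ⟨h1, h2⟩; exact ⟨h1, lt_of_lt_of_le htpos h1, h2⟩
    have hJ : (∫⁻ s in Icc t r, ENNReal.ofReal (s⁻¹ ^ 2)) ≤ ENNReal.ofReal t⁻¹ := by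
      have hcont : ContinuousOn (fun s : ℝ => s⁻¹ ^ 2) (Icc t r) :=
        (continuousOn_id.inv₀ fun x hx => ne_of_gt (lt_of_lt_of_le htpos hx.1)).pow 2
      have hintJ : IntegrableOn (fun s : ℝ => s⁻¹ ^ 2) (Icc t r) := hcont.integrableOn_Icc
      rw [← ofReal_integral_eq_lintegral_ofReal hintJ
        (Filter.Eventually.of_forall fun s => by positivity)]
      apply ENNReal.ofReal_le_ofReal
      rw [MeasureTheory.integral_Icc_eq_integral_Ioc, ← intervalIntegral.integral_of_le ht.2]
      have hftc : ∫ s in t..r, s⁻¹ ^ 2 = (-(r⁻¹)) - (-(t⁻¹)) := by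
        apply intervalIntegral.integral_eq_sub_of_hasDerivAt
        · intro x hx
          rw [uIcc_of_le ht.2] at hx
          have hx0 : x ≠ 0 := ne_of_gt (lt_of_lt_of_le htpos hx.1)
          have := (hasDerivAt_inv hx0).neg
          convert this using 1
          · rfl
          rw [inv_pow]; ring
        · apply ContinuousOn.intervalIntegrable
          rw [uIcc_of_le ht.2]; exact hcont
      rw [hftc]
      have hrinv : (0:ℝ) < r⁻¹ := inv_pos.2 hr
      linarith
    calc (∫⁻ s in I, ENNReal.ofReal (s⁻¹ ^ 2) * (Ioc 0 s).indicator G t)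
        = ∫⁻ s in I, (Ici t).indicator (fun s => ENNReal.ofReal (s⁻¹ ^ 2) * G t) s :=
          lintegral_congr fun s => heqfun s
      _ = ∫⁻ s in Icc t r, ENNReal.ofReal (s⁻¹ ^ 2) * G t := by
          rw [lintegral_indicator measurableSet_Ici, Measure.restrict_restrict measurableSet_Ici,
            hsetEq]
      _ = (∫⁻ s in Icc t r, ENNReal.ofReal (s⁻¹ ^ 2)) * G t :=
          lintegral_mul_const' _ _ ENNReal.ofReal_ne_top
      _ ≤ ENNReal.ofReal t⁻¹ * G t := by gcongr
      _ = ENNReal.ofReal (t * g₀ t ^ 2) := by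
          rw [hGdef, ← ENNReal.ofReal_mul (inv_nonneg.2 htpos.le)]
          congr 1
          field_simp
  -- Step 3d: conclusion
  have hfinal1 : (∫⁻ t in I, ENNReal.ofReal (t * g₀ t ^ 2))
      = ∫⁻ t in I, ENNReal.ofReal (t * g t ^ 2) := by
    apply lintegral_congr_ae
    have hae : g =ᵐ[volume.restrict I] g₀ :=
      ae_restrict_of_ae_restrict_of_subset hIsubIcc hgg₀
    filter_upwards [hae] with t ht
    rw [ht]
  have hfinal2 : (∫⁻ t in I, ENNReal.ofReal (t * g t ^ 2))
      = ENNReal.ofReal (∫ t in I, t * g t ^ 2) := by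
    have hic : IntegrableOn (fun t => t * g t ^ 2) I :=
      ((continuousOn_id.mul (hg.pow 2)).integrableOn_Icc).mono_set Ioc_subset_Icc_self
    rw [ofReal_integral_eq_lintegral_ofReal hic ?_]
    filter_upwards [ae_restrict_mem measurableSet_Ioc] with t ht
    exact mul_nonneg ht.1.le (sq_nonneg _)
  calc (∫⁻ s in Ioc 0 r, ENNReal.ofReal (ξ s ^ 2 / s))
      ≤ ∫⁻ s in I, ∫⁻ t in I, ENNReal.ofReal (s⁻¹ ^ 2) * (Ioc 0 s).indicator G t := step1
    _ = ∫⁻ t in I, ∫⁻ s in I, ENNReal.ofReal (s⁻¹ ^ 2) * (Ioc 0 s).indicator G t := hswap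
    _ ≤ ∫⁻ t in I, ENNReal.ofReal (t * g₀ t ^ 2) := by
        apply lintegral_mono_ae
        filter_upwards [ae_restrict_mem measurableSet_Ioc] with t ht
        exact hinner2 t ht
    _ = ∫⁻ t in I, ENNReal.ofReal (t * g t ^ 2) := hfinal1
    _ = ENNReal.ofReal (∫ t in I, t * g t ^ 2) := hfinal2
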